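/- Let σ > 0, R ≥ 0, C ∈ [0,1], and let g : [0,1] → [0,1] be measurable with ∫₀¹ g(y) dy = C. Then ∫₀¹ g(y) · exp((R/σ)·Φ⁻¹(y) − R²/(2σ²)) dy ≥ ∫₀^C exp((R/σ)·Φ⁻¹(y) − R²/(2σ²)) dy = Φ(Φ⁻¹(C) − R/σ), with equality when g is the indicator function of [0, C]. -/

import Mathlib

open MeasureTheory ProbabilityTheory Real

noncomputable section

/-- The standard normal cumulative distribution function Φ. -/
def Phi (x : ℝ) : ℝ := ((gaussianReal 0 1) (Set.Iic x)).toReal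

/-- The inverse Φ⁻¹ of the standard normal CDF (meaningful on (0,1)). -/
def PhiInv : ℝ → ℝ := Function.invFun Phi

/-- The standard normal probability density function Φ'. -/
def stdPdf (x : ℝ) : ℝ := Real.exp (-x ^ 2 / 2) / Real.sqrt (2 * Real.pi)

/-- `Φ(Φ⁻¹(y) - c)` with the conventions `Φ⁻¹(0) = -∞`, `Φ⁻¹(1) = +∞`,
`Φ(-∞ - c) = 0`, `Φ(+∞ - c) = 1`. -/
def PhiShift (c y : ℝ) : ℝ := if y ≤ 0 then 0 else if 1 ≤ y then 1 else Phi (PhiInv y - c)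

/-- `Φ'(Φ⁻¹(y))` with the conventions `Φ⁻¹(0) = -∞`, `Φ⁻¹(1) = +∞`, `Φ'(±∞) = 0`. -/
def pdfAtQuantile (y : ℝ) : ℝ := if y ≤ 0 then 0 else if 1 ≤ y then 0 else stdPdf (PhiInv y)

/-- The isotropic Gaussian measure `N(0, σ²I_d)` on `ℝ^d`. -/
def gaussPi (σ : ℝ) (d : ℕ) : Measure (EuclideanSpace ℝ (Fin d)) :=
  Measure.map (MeasurableEquiv.toLp 2 (Fin d → ℝ))
    (Measure.pi fun _ : Fin d => gaussianReal 0 (Real.toNNReal (σ ^ 2)))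

/-- The Gaussian-smoothed function `p_a(x) = E_{ε ~ N(0,σ²I_d)}[f(x+ε)]`. -/
def smoothed (σ : ℝ) (d : ℕ) (f : EuclideanSpace ℝ (Fin d) → ℝ)
    (x : EuclideanSpace ℝ (Fin d)) : ℝ := ∫ ε, f (x + ε) ∂(gaussPi σ d)

/-- A centered real random variable `Z` is `(a,b)`-subexponential if `E[Z] = 0` and
`E[exp (l Z)] ≤ exp (a² l² / 2)` for all `|l| ≤ 1/b`. -/
def IsSubexponential {Ω : Type*} [MeasurableSpace Ω] (μ : Measure Ω) (Z : Ω → ℝ)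
    (a b : ℝ) : Prop :=
  (∫ ω, Z ω ∂μ) = 0 ∧
    ∀ l : ℝ, |l| ≤ 1 / b → (∫ ω, Real.exp (l * Z ω) ∂μ) ≤ Real.exp (a ^ 2 * l ^ 2 / 2)

open Set Filter Topology

lemma stdPdf_eq (x : ℝ) : gaussianPDFReal 0 1 x = stdPdf x := by
  simp [gaussianPDFReal, stdPdf, div_eq_inv_mul]

lemma stdPdf_pos (x : ℝ) : 0 < stdPdf x := by
  rw [← stdPdf_eq]; exact gaussianPDFReal_pos 0 1 x one_ne_zero

lemma continuous_stdPdf : Continuous stdPdf := by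
  unfold stdPdf; fun_prop

lemma integrable_stdPdf : Integrable stdPdf := by
  have := integrable_gaussianPDFReal 0 1
  simpa [funext stdPdf_eq] using this

lemma gauss_set_integral (s : Set ℝ) :
    ((gaussianReal 0 1) s).toReal = ∫ x in s, stdPdf x := by
  rw [gaussianReal_apply_eq_integral 0 one_ne_zero s, ENNReal.toReal_ofReal]
  · simp [funext stdPdf_eq]
  · refine setIntegral_nonneg_of_ae (ae_of_all _ (fun x => ?_)); rw [stdPdf_eq]; exact (stdPdf_pos x).le

lemma Phi_eq (x : ℝ) : Phi x = ∫ u in Iic x, stdPdf u := gauss_set_integral _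

lemma integral_stdPdf : ∫ x, stdPdf x = 1 := by
  have := gauss_set_integral univ
  simpa using this.symm


lemma Phi_sub_Phi (a b : ℝ) : Phi b - Phi a = ∫ u in a..b, stdPdf u := by
  rw [Phi_eq, Phi_eq, ← intervalIntegral.integral_Iic_sub_Iic
    integrable_stdPdf.integrableOn integrable_stdPdf.integrableOn]

lemma hasDerivAt_Phi (x : ℝ) : HasDerivAt Phi (stdPdf x) x := by
  have h : ∀ y, Phi y = Phi 0 + ∫ u in (0:ℝ)..y, stdPdf u := by
    intro y; have := Phi_sub_Phi 0 y; linarith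
  have : HasDerivAt (fun y => Phi 0 + ∫ u in (0:ℝ)..y, stdPdf u) (stdPdf x) x := by
    refine HasDerivAt.const_add _ ?_
    exact intervalIntegral.integral_hasDerivAt_right
      (integrable_stdPdf.intervalIntegrable)
      (continuous_stdPdf.stronglyMeasurableAtFilter _ _)
      continuous_stdPdf.continuousAt
  simpa [← funext h] using this

lemma continuous_Phi : Continuous Phi :=
  continuous_iff_continuousAt.2 fun x => (hasDerivAt_Phi x).continuousAt

lemma strictMono_Phi : StrictMono Phi := by
  intro a b hab
  have : 0 < ∫ u in a..b, stdPdf u :=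
    intervalIntegral.intervalIntegral_pos_of_pos
      (integrable_stdPdf.intervalIntegrable) (fun x => stdPdf_pos x) hab
  have h := Phi_sub_Phi a b; linarith

lemma Phi_injective : Function.Injective Phi := strictMono_Phi.injective

lemma Phi_nonneg (x : ℝ) : 0 ≤ Phi x := ENNReal.toReal_nonneg

lemma Phi_le_one (x : ℝ) : Phi x ≤ 1 := by
  unfold Phi
  rw [← ENNReal.toReal_one]
  exact ENNReal.toReal_mono (by simp) prob_le_one

lemma Phi_mem_Ioo (x : ℝ) : Phi x ∈ Ioo (0:ℝ) 1 :=
  ⟨lt_of_le_of_lt (Phi_nonneg (x-1)) (strictMono_Phi (by linarith)),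
   lt_of_lt_of_le (strictMono_Phi (show x < x+1 by linarith)) (Phi_le_one (x+1))⟩

lemma tendsto_Phi_atTop : Tendsto Phi atTop (𝓝 1) := by
  have h := tendsto_measure_Iic_atTop (gaussianReal 0 1)
  rw [measure_univ] at h
  have := (ENNReal.tendsto_toReal ENNReal.one_ne_top).comp h
  exact this

lemma tendsto_Phi_atBot : Tendsto Phi atBot (𝓝 0) := by
  have key : ∀ x : ℝ, Phi x ≤ 1 - ((gaussianReal 0 1) (Ici (x+1))).toReal := by
    intro x
    have hdisj : Disjoint (Iic x) (Ici (x+1)) := by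
      apply Iic_disjoint_Ici.2; linarith
    have hadd : (gaussianReal 0 1) (Iic x) + (gaussianReal 0 1) (Ici (x+1)) ≤ 1 := by
      rw [← measure_union hdisj measurableSet_Ici]
      exact prob_le_one
    have h1 : (gaussianReal 0 1) (Iic x) ≠ ⊤ := measure_ne_top _ _
    have h2 : (gaussianReal 0 1) (Ici (x+1)) ≠ ⊤ := measure_ne_top _ _
    have := ENNReal.toReal_mono ENNReal.one_ne_top hadd
    rw [ENNReal.toReal_add h1 h2, ENNReal.toReal_one] at this
    unfold Phi; linarith
  have htail : Tendsto (fun x : ℝ => 1 - ((gaussianReal 0 1) (Ici (x+1))).toReal)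
      atBot (𝓝 0) := by
    have h := tendsto_measure_Ici_atBot (gaussianReal 0 1)
    rw [measure_univ] at h
    have h2 := (ENNReal.tendsto_toReal ENNReal.one_ne_top).comp h
    have h3 := h2.comp (tendsto_atBot_add_const_right atBot (1:ℝ) tendsto_id)
    have := (tendsto_const_nhds (x := (1:ℝ)) (f := atBot)).sub h3
    simpa using this
  exact tendsto_of_tendsto_of_tendsto_of_le_of_le tendsto_const_nhds htail
    (fun x => Phi_nonneg x) key

lemma Phi_surj {y : ℝ} (hy : y ∈ Ioo (0:ℝ) 1) : ∃ x, Phi x = y := by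
  obtain ⟨a, ha⟩ := (tendsto_Phi_atBot.eventually (eventually_lt_nhds hy.1)).exists
  obtain ⟨b, hb⟩ := (tendsto_Phi_atTop.eventually (eventually_gt_nhds hy.2)).exists
  have hm : min a b ≤ b := min_le_right a b
  have hmem : y ∈ Icc (Phi (min a b)) (Phi b) :=
    ⟨le_trans (strictMono_Phi.monotone (min_le_left a b)) ha.le, hb.le⟩
  obtain ⟨x, _, hx⟩ := intermediate_value_Icc hm continuous_Phi.continuousOn hmem
  exact ⟨x, hx⟩

lemma Phi_PhiInv {y : ℝ} (hy : y ∈ Ioo (0:ℝ) 1) : Phi (PhiInv y) = y :=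
  Function.invFun_eq (Phi_surj hy)

lemma PhiInv_Phi (x : ℝ) : PhiInv (Phi x) = x :=
  Function.leftInverse_invFun Phi_injective x


lemma image_Phi_Iic (t : ℝ) : Phi '' Iic t = Ioc 0 (Phi t) := by
  ext y; constructor
  · rintro ⟨x, hx, rfl⟩
    exact ⟨(Phi_mem_Ioo x).1, strictMono_Phi.monotone hx⟩
  · rintro ⟨h0, h1⟩
    have hy : y ∈ Ioo (0:ℝ) 1 := ⟨h0, lt_of_le_of_lt h1 (Phi_mem_Ioo t).2⟩
    obtain ⟨x, rfl⟩ := Phi_surj hy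
    exact ⟨x, strictMono_Phi.le_iff_le.1 h1, rfl⟩

lemma range_Phi : Set.range Phi = Ioo (0:ℝ) 1 := by
  ext y; constructor
  · rintro ⟨x, rfl⟩; exact Phi_mem_Ioo x
  · exact fun hy => Phi_surj hy

lemma key_pdf (c x : ℝ) : stdPdf x * Real.exp (c * x - c ^ 2 / 2) = stdPdf (x - c) := by
  unfold stdPdf
  rw [div_mul_eq_mul_div, ← Real.exp_add]
  ring_nf

lemma integral_Iic_shift (t c : ℝ) : ∫ x in Iic t, stdPdf (x - c) = Phi (t - c) := by
  rw [Phi_eq, ← integral_indicator measurableSet_Iic, ← integral_indicator measurableSet_Iic]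
  have h : ∀ x : ℝ, (Iic t).indicator (fun x => stdPdf (x - c)) x
      = (fun x => (Iic (t - c)).indicator stdPdf (x - c)) x := by
    intro x
    simp only [indicator_apply, mem_Iic, sub_le_sub_iff_right]
  rw [funext h, integral_sub_right_eq_self (fun x => (Iic (t - c)).indicator stdPdf x) c]

lemma subst_integral (c : ℝ) (s : Set ℝ) (hs : MeasurableSet s) :
    ∫ y in Phi '' s, Real.exp (c * PhiInv y - c ^ 2 / 2)
      = ∫ x in s, stdPdf (x - c) := by
  rw [integral_image_eq_integral_abs_deriv_smul hs
    (fun x _ => (hasDerivAt_Phi x).hasDerivWithinAt) Phi_injective.injOn]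
  congr 1; ext x
  rw [PhiInv_Phi, smul_eq_mul, abs_of_pos (stdPdf_pos x), key_pdf]

lemma setint_w {C : ℝ} (hC : C ∈ Ioo (0:ℝ) 1) (c : ℝ) :
    ∫ y in Ioc 0 C, Real.exp (c * PhiInv y - c ^ 2 / 2) = Phi (PhiInv C - c) := by
  have h1 : Phi '' Iic (PhiInv C) = Ioc 0 C := by rw [image_Phi_Iic, Phi_PhiInv hC]
  rw [← h1, subst_integral c _ measurableSet_Iic, integral_Iic_shift]

lemma setint_w_one (c : ℝ) :
    ∫ y in Ioo (0:ℝ) 1, Real.exp (c * PhiInv y - c ^ 2 / 2) = 1 := by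
  have h1 : Phi '' univ = Ioo (0:ℝ) 1 := by rw [image_univ, range_Phi]
  rw [← h1, subst_integral c _ MeasurableSet.univ]
  have h2 : ∫ x in (univ : Set ℝ), stdPdf (x - c) = ∫ x, stdPdf (x - c) := by
    simp [Measure.restrict_univ]
  rw [h2, integral_sub_right_eq_self stdPdf c, integral_stdPdf]

lemma integrableOn_w (c : ℝ) :
    IntegrableOn (fun y => Real.exp (c * PhiInv y - c ^ 2 / 2)) (Ioo (0:ℝ) 1) := by
  have h1 : Phi '' univ = Ioo (0:ℝ) 1 := by rw [image_univ, range_Phi]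
  rw [← h1, integrableOn_image_iff_integrableOn_abs_deriv_smul MeasurableSet.univ
    (fun x _ => (hasDerivAt_Phi x).hasDerivWithinAt) Phi_injective.injOn]
  have : (fun x => |stdPdf x| • Real.exp (c * PhiInv (Phi x) - c ^ 2 / 2))
      = fun x => stdPdf (x - c) := by
    ext x; rw [PhiInv_Phi, smul_eq_mul, abs_of_pos (stdPdf_pos x), key_pdf]
  rw [this]
  exact (integrable_stdPdf.comp_sub_right c).integrableOn

lemma monoOn_PhiInv : MonotoneOn PhiInv (Ioo (0:ℝ) 1) := fun a ha b hb hab =>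
  strictMono_Phi.le_iff_le.1 (by rw [Phi_PhiInv ha, Phi_PhiInv hb]; exact hab)

lemma hres : volume.restrict (Ioc (0:ℝ) 1) = volume.restrict (Ioo (0:ℝ) 1) :=
  (Measure.restrict_congr_set Ioo_ae_eq_Ioc).symm

lemma aemeas_w (c : ℝ) :
    AEMeasurable (fun y => Real.exp (c * PhiInv y - c ^ 2 / 2))
      (volume.restrict (Ioc (0:ℝ) 1)) := by
  rw [hres]
  have h1 : AEMeasurable PhiInv (volume.restrict (Ioo (0:ℝ) 1)) :=
    aemeasurable_restrict_of_monotoneOn measurableSet_Ioo monoOn_PhiInv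
  exact Real.measurable_exp.comp_aemeasurable ((h1.const_mul c).sub aemeasurable_const)

lemma integrableOn_w' (c : ℝ) :
    IntegrableOn (fun y => Real.exp (c * PhiInv y - c ^ 2 / 2)) (Ioc (0:ℝ) 1) := by
  rw [IntegrableOn, hres]; exact integrableOn_w c

lemma inter_Icc {C : ℝ} (hC1 : C ≤ 1) : Ioc (0:ℝ) 1 ∩ Icc 0 C = Ioc 0 C := by
  ext y; simp only [mem_inter_iff, mem_Ioc, mem_Icc]
  constructor
  · rintro ⟨⟨h1, _⟩, ⟨_, h4⟩⟩; exact ⟨h1, h4⟩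
  · rintro ⟨h1, h2⟩; exact ⟨⟨h1, h2.trans hC1⟩, h1.le, h2⟩

/-- one-constraint minimization: for measurable `g : [0,1] → [0,1]` with
`∫₀¹ g = C`, `∫₀¹ g(y) exp((R/σ)Φ⁻¹(y) - R²/(2σ²)) dy ≥ ∫₀^C exp((R/σ)Φ⁻¹(y) - R²/(2σ²)) dy
= Φ(Φ⁻¹(C) - R/σ)`, with equality when `g` is the indicator of `[0, C]`. -/
theorem weighted_integral_min_one_constraint (σ R C : ℝ) (hσ : 0 < σ) (hR : 0 ≤ R)
    (hC : C ∈ Set.Icc (0 : ℝ) 1)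
    (g : ℝ → ℝ) (hg : Measurable g) (hg01 : ∀ y ∈ Set.Icc (0 : ℝ) 1, g y ∈ Set.Icc (0 : ℝ) 1)
    (hint : (∫ y in (0 : ℝ)..1, g y) = C) :
    ((∫ y in (0 : ℝ)..1, g y * Real.exp ((R / σ) * PhiInv y - R ^ 2 / (2 * σ ^ 2))) ≥
      ∫ y in (0 : ℝ)..C, Real.exp ((R / σ) * PhiInv y - R ^ 2 / (2 * σ ^ 2))) ∧
    ((∫ y in (0 : ℝ)..C, Real.exp ((R / σ) * PhiInv y - R ^ 2 / (2 * σ ^ 2))) =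
      PhiShift (R / σ) C) ∧
    ((∀ y ∈ Set.Icc (0 : ℝ) 1,
        g y = Set.indicator (Set.Icc (0 : ℝ) C) (fun _ => (1 : ℝ)) y) →
      (∫ y in (0 : ℝ)..1, g y * Real.exp ((R / σ) * PhiInv y - R ^ 2 / (2 * σ ^ 2))) =
        PhiShift (R / σ) C) := by
  set c : ℝ := R / σ with hc_def
  have hc : 0 ≤ c := div_nonneg hR hσ.le
  have hcsq : ∀ y : ℝ, (R / σ) * PhiInv y - R ^ 2 / (2 * σ ^ 2)
      = c * PhiInv y - c ^ 2 / 2 := by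
    intro y; rw [hc_def]; field_simp
  set w : ℝ → ℝ := fun y => Real.exp (c * PhiInv y - c ^ 2 / 2) with hw_def
  have hw_pos : ∀ y, 0 < w y := fun y => Real.exp_pos _
  simp only [← hc_def] at hcsq
  simp only [hcsq]
  -- the interval integrals as set integrals
  have h01 : (∫ y in (0:ℝ)..1, g y * w y) = ∫ y in Ioc (0:ℝ) 1, g y * w y :=
    intervalIntegral.integral_of_le zero_le_one
  have h0C : (∫ y in (0:ℝ)..C, w y) = ∫ y in Ioc (0:ℝ) C, w y :=
    intervalIntegral.integral_of_le hC.1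
  -- Part 2
  have part2 : (∫ y in (0:ℝ)..C, w y) = PhiShift c C := by
    rcases eq_or_lt_of_le hC.1 with h0 | h0
    · rw [← h0]; simp [PhiShift, intervalIntegral.integral_same]
    rcases eq_or_lt_of_le hC.2 with h1 | h1
    · rw [h0C, h1]
      rw [show Ioc (0:ℝ) 1 = Ioc (0:ℝ) 1 from rfl, ← MeasureTheory.setIntegral_congr_set
        (Ioo_ae_eq_Ioc (a := (0:ℝ)) (b := (1:ℝ)))]
      rw [hw_def, setint_w_one c]
      simp [PhiShift]
    · rw [h0C, hw_def, setint_w ⟨h0, h1⟩ c]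
      simp [PhiShift, not_le.2 h0, not_le.2 h1]
  -- shared integrability facts
  set ind : ℝ → ℝ := (Icc (0:ℝ) C).indicator (fun _ => (1:ℝ)) with hind_def
  have hμfin : volume (Ioc (0:ℝ) 1) < ⊤ := by
    rw [Real.volume_Ioc]; norm_num
  have hg_int : IntegrableOn g (Ioc (0:ℝ) 1) := by
    refine Integrable.mono ((integrableOn_const_iff (C := (1:ℝ))).2 (Or.inr hμfin))
      hg.aestronglyMeasurable.restrict ?_
    filter_upwards [ae_restrict_mem measurableSet_Ioc] with y hy
    have := hg01 y (Ioc_subset_Icc_self hy)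
    rw [Real.norm_eq_abs, abs_of_nonneg this.1]
    simpa using this.2
  have hind_int : IntegrableOn ind (Ioc (0:ℝ) 1) := by
    refine Integrable.mono ((integrableOn_const_iff (C := (1:ℝ))).2 (Or.inr hμfin))
      ((measurable_const.indicator measurableSet_Icc).aestronglyMeasurable.restrict) ?_
    refine ae_of_all _ fun y => ?_
    rw [Real.norm_eq_abs]
    by_cases h : y ∈ Icc (0:ℝ) C <;> simp [hind_def, h]
  have hw_int := integrableOn_w' c
  have hgw_int : IntegrableOn (fun y => g y * w y) (Ioc (0:ℝ) 1) := by
    refine Integrable.mono hw_int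
      ((hg.aemeasurable.restrict.mul (aemeas_w c)).aestronglyMeasurable) ?_
    filter_upwards [ae_restrict_mem measurableSet_Ioc] with y hy
    have h01y := hg01 y (Ioc_subset_Icc_self hy)
    rw [Real.norm_eq_abs, Real.norm_eq_abs, abs_mul, abs_of_nonneg h01y.1,
      abs_of_pos (hw_pos y)]
    exact mul_le_of_le_one_left (hw_pos y).le h01y.2
  have hindw_int : IntegrableOn (fun y => ind y * w y) (Ioc (0:ℝ) 1) := by
    refine Integrable.mono hw_int
      (((measurable_const.indicator measurableSet_Icc).aemeasurable.restrict.mul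
        (aemeas_w c)).aestronglyMeasurable) ?_
    refine ae_of_all _ fun y => ?_
    rw [Real.norm_eq_abs, Real.norm_eq_abs, abs_mul, abs_of_pos (hw_pos y)]
    by_cases h : y ∈ Icc (0:ℝ) C <;>
      simp [hind_def, h, abs_of_pos (hw_pos y), (hw_pos y).le]
  have hindw_eq : ∀ y, ind y * w y = (Icc (0:ℝ) C).indicator w y := by
    intro y; by_cases h : y ∈ Icc (0:ℝ) C <;> simp [hind_def, h]
  have hindwC : ∫ y in Ioc (0:ℝ) 1, ind y * w y = ∫ y in Ioc (0:ℝ) C, w y := by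
    simp_rw [hindw_eq]
    rw [setIntegral_indicator measurableSet_Icc, inter_Icc hC.2]
  refine ⟨?_, part2, ?_⟩
  · -- Part 1: inequality
    rcases eq_or_lt_of_le hC.1 with h0 | h0
    · rw [← h0, intervalIntegral.integral_same]
      exact intervalIntegral.integral_nonneg zero_le_one
        fun u hu => mul_nonneg (hg01 u hu).1 (hw_pos u).le
    rcases eq_or_lt_of_le hC.2 with h1 | h1
    · -- C = 1 : g = 1 a.e.
      have hint' : ∫ y in Ioc (0:ℝ) 1, g y = C := by
        rw [← intervalIntegral.integral_of_le zero_le_one]; exact hint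
      have hone : ∫ _y in Ioc (0:ℝ) 1, (1:ℝ) = 1 := by
        simp [Real.volume_Ioc]
      have hsub : ∫ y in Ioc (0:ℝ) 1, (1 - g y) = 0 := by
        rw [integral_sub ((integrableOn_const_iff (C := (1:ℝ))).2 (Or.inr hμfin)) hg_int, hone, hint', ← h1,
          sub_self]
      have hnn : 0 ≤ᵐ[volume.restrict (Ioc (0:ℝ) 1)] fun y => 1 - g y := by
        filter_upwards [ae_restrict_mem measurableSet_Ioc] with y hy
        have := hg01 y (Ioc_subset_Icc_self hy)
        simp [this.2]
      have hae := (integral_eq_zero_iff_of_nonneg_ae hnn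
        (((integrableOn_const_iff (C := (1:ℝ))).2 (Or.inr hμfin)).sub hg_int)).1 hsub
      have hgw : (fun y => g y * w y) =ᵐ[volume.restrict (Ioc (0:ℝ) 1)] w := by
        filter_upwards [hae] with y hy
        have hy1 : g y = 1 := by
          have : (1:ℝ) - g y = 0 := hy
          linarith
        rw [hy1, one_mul]
      rw [h01, integral_congr_ae hgw, h0C, h1]
    · -- interior case
      have hCIoo : C ∈ Ioo (0:ℝ) 1 := ⟨h0, h1⟩
      set K : ℝ := Real.exp (c * PhiInv C - c ^ 2 / 2) with hK_def
      have hIoo_ae : ∀ᵐ y ∂volume.restrict (Ioc (0:ℝ) 1), y ∈ Ioo (0:ℝ) 1 := by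
        rw [hres]; exact ae_restrict_mem measurableSet_Ioo
      have hKmono : ∀ y ∈ Ioo (0:ℝ) 1, 0 ≤ (g y - ind y) * (w y - K) := by
        intro y hy
        have hyI : y ∈ Icc (0:ℝ) 1 := Ioo_subset_Icc_self hy
        rcases le_or_gt y C with hyc | hyc
        · have hind1 : ind y = 1 := indicator_of_mem (mem_Icc.2 ⟨hy.1.le, hyc⟩) _
          have hwK : w y ≤ K := by
            rw [hw_def, hK_def]
            exact Real.exp_le_exp.2 (sub_le_sub_right
              (mul_le_mul_of_nonneg_left (monoOn_PhiInv hy hCIoo hyc) hc) _)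
          have hg1 : g y ≤ 1 := (hg01 y hyI).2
          rw [hind1]
          nlinarith [sub_nonneg.2 hg1, sub_nonneg.2 hwK]
        · have hind0 : ind y = 0 :=
            indicator_of_notMem (fun h => absurd h.2 (not_le.2 hyc)) _
          have hwK : K ≤ w y := by
            rw [hw_def, hK_def]
            exact Real.exp_le_exp.2 (sub_le_sub_right
              (mul_le_mul_of_nonneg_left (monoOn_PhiInv hCIoo hy hyc.le) hc) _)
          rw [hind0, sub_zero]
          exact mul_nonneg (hg01 y hyI).1 (by linarith)
      have hnn : 0 ≤ ∫ y in Ioc (0:ℝ) 1, (g y - ind y) * (w y - K) :=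
        integral_nonneg_of_ae (by filter_upwards [hIoo_ae] with y hy using hKmono y hy)
      have hsplit : (fun y => (g y - ind y) * (w y - K))
          = fun y => (g y * w y - ind y * w y) - K * (g y - ind y) := by
        ext y; ring
      have i1 : Integrable (fun y => g y * w y - ind y * w y)
          (volume.restrict (Ioc (0:ℝ) 1)) := hgw_int.sub hindw_int
      have i2 : Integrable (fun y => K * (g y - ind y))
          (volume.restrict (Ioc (0:ℝ) 1)) := (hg_int.sub hind_int).const_mul K
      have i3 : Integrable (fun y => g y - ind y)
          (volume.restrict (Ioc (0:ℝ) 1)) := hg_int.sub hind_int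
      rw [hsplit, integral_sub i1 i2, integral_sub hgw_int hindw_int, MeasureTheory.integral_const_mul,
        integral_sub hg_int hind_int] at hnn
      have hgC : ∫ y in Ioc (0:ℝ) 1, g y = C := by
        rw [← intervalIntegral.integral_of_le zero_le_one]; exact hint
      have hindC : ∫ y in Ioc (0:ℝ) 1, ind y = C := by
        rw [hind_def, setIntegral_indicator measurableSet_Icc, inter_Icc hC.2]
        simp [Real.volume_Ioc, h0.le]
      rw [hgC, hindC, sub_self, mul_zero, sub_zero, hindwC] at hnn
      rw [h01, h0C]
      linarith
  · -- Part 3: equality for indicator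
    intro heq
    have huIcc : uIcc (0:ℝ) 1 = Icc (0:ℝ) 1 := uIcc_of_le zero_le_one
    have hcongr : (∫ y in (0:ℝ)..1, g y * w y) = ∫ y in (0:ℝ)..1, ind y * w y := by
      refine intervalIntegral.integral_congr fun y hy => ?_
      rw [heq y (huIcc ▸ hy)]
    rw [hcongr, intervalIntegral.integral_of_le zero_le_one, hindwC, ← h0C]
    exact part2
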